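/- Let q = p^r be a prime power and M a positive integer with p | M and gcd(q² − 1, M) = 1. Then the image ratio of the M-th power map on GL₂(F_q) equals 1 − 1/q, i.e. |{g^M : g ∈ GL₂(F_q)}| / |GL₂(F_q)| = 1 − 1/q. -/

import Mathlib

open Matrix Polynomial

lemma CH2 {R : Type} [CommRing R] (A : Matrix (Fin 2) (Fin 2) R) :
    A ^ 2 - A.trace • A + A.det • 1 = 0 := by
  ext i j
  fin_cases i <;> fin_cases j <;>
    simp [pow_two, Matrix.mul_apply, Matrix.trace_fin_two, Matrix.det_fin_two,
      Fin.sum_univ_succ, Matrix.one_apply] <;> ring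

variable {F : Type} [Field F] [Fintype F]

lemma dichotomy (A : Matrix (Fin 2) (Fin 2) F) (hA : IsUnit A.det) :
    A ^ (Fintype.card F ^ 2) = A ∨
      ∃ a : F, a ≠ 0 ∧ A ≠ a • 1 ∧ (A - a • 1) ^ 2 = 0 := by
  set q := Fintype.card F with hq
  set t := A.trace with ht
  set d := A.det with hd
  set χ : F[X] := X ^ 2 - C t * X + C d with hχ
  have haev : aeval A χ = 0 := by
    have := CH2 A
    simp only [hχ, map_add, map_sub, _root_.map_mul, map_pow, aeval_X, aeval_C,
      Algebra.algebraMap_eq_smul_one, smul_mul_assoc, one_mul]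
    exact this
  have hmonic : χ.Monic := by
    have h1 : χ = X ^ 2 - (C t * X + C (-d)) := by rw [hχ, C_neg]; ring
    rw [h1]
    exact monic_X_pow_sub (lt_of_le_of_lt degree_linear_le (by norm_num))
  have hdeg : χ.natDegree = 2 := by
    have h1 : χ = C 1 * X ^ 2 + C (-t) * X + C d := by rw [hχ]; simp [C_neg]; ring
    rw [h1, natDegree_quadratic one_ne_zero]
  by_cases hroot : ∃ a : F, IsRoot χ a
  · obtain ⟨a, ha⟩ := hroot
    set b := t - a with hb
    have hdval : d = a * b := by
      have := ha
      simp only [IsRoot, hχ, eval_add, eval_sub, eval_mul, eval_pow, eval_X, eval_C] at this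
      rw [hb]; linear_combination this
    have hfac : χ = (X - C a) * (X - C b) := by
      have h1 : (C t : F[X]) = C a + C b := by rw [← C_add]; congr 1; rw [hb]; ring
      have h2 : (C d : F[X]) = C a * C b := by rw [← C_mul, hdval]
      rw [hχ, h1, h2]; ring
    have haev2 : (A - a • 1) * (A - b • 1) = 0 := by
      have := haev
      rw [hfac] at this
      simpa only [_root_.map_mul, map_sub, aeval_X, aeval_C,
        Algebra.algebraMap_eq_smul_one] using this
    have ha0 : a ≠ 0 := by
      rintro rfl
      rw [zero_mul] at hdval
      rw [hdval] at hA
      simpa using hA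
    rcases eq_or_ne a b with hab | hab
    · rw [← hab] at haev2
      by_cases hAa : A = a • 1
      · left
        rw [hAa, _root_.smul_pow, one_pow, FiniteField.pow_card_pow]
      · right
        exact ⟨a, ha0, hAa, by rw [pow_two]; exact haev2⟩
    · left
      have hcop : IsCoprime (X - C a : F[X]) (X - C b) :=
        isCoprime_X_sub_C_of_isUnit_sub ((sub_ne_zero.mpr hab).isUnit)
      have hda : (X - C a : F[X]) ∣ X ^ q ^ 2 - X :=
        dvd_iff_isRoot.mpr (by
          simp only [IsRoot, eval_sub, eval_pow, eval_X]
          rw [FiniteField.pow_card_pow, sub_self])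
      have hdb : (X - C b : F[X]) ∣ X ^ q ^ 2 - X :=
        dvd_iff_isRoot.mpr (by
          simp only [IsRoot, eval_sub, eval_pow, eval_X]
          rw [FiniteField.pow_card_pow, sub_self])
      have hdvd : χ ∣ X ^ q ^ 2 - X := hfac ▸ hcop.mul_dvd hda hdb
      obtain ⟨R, hR⟩ := hdvd
      have : A ^ q ^ 2 - A = 0 := by
        have := congrArg (aeval A) hR
        simpa only [_root_.map_mul, map_sub, map_pow, aeval_X, haev, zero_mul] using this
      rw [sub_eq_zero] at this
      exact this
  · left
    have hirr : Irreducible χ := by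
      rw [hmonic.irreducible_iff_roots_eq_zero_of_degree_le_three (by omega) (by omega)]
      by_contra h
      obtain ⟨x, hx⟩ := Multiset.exists_mem_of_ne_zero h
      exact hroot ⟨x, isRoot_of_mem_roots hx⟩
    haveI : Fact (Irreducible χ) := ⟨hirr⟩
    haveI : Module.Finite F (AdjoinRoot χ) := (AdjoinRoot.powerBasis hmonic.ne_zero).finite
    haveI : Finite (AdjoinRoot χ) := Module.finite_of_finite F
    haveI : Fintype (AdjoinRoot χ) := Fintype.ofFinite _
    have hcardK : Fintype.card (AdjoinRoot χ) = q ^ 2 := by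
      rw [Module.card_eq_pow_finrank (K := F), (AdjoinRoot.powerBasis hmonic.ne_zero).finrank,
        AdjoinRoot.powerBasis_dim, hdeg]
    set ξ := AdjoinRoot.root χ with hξdef
    have hξ : aeval ξ χ = 0 := by
      rw [aeval_def, AdjoinRoot.algebraMap_eq]
      exact AdjoinRoot.eval₂_root χ
    have hmin : minpoly F ξ = χ := (minpoly.eq_of_irreducible_of_monic hirr hξ hmonic).symm
    have hdvd : χ ∣ X ^ q ^ 2 - X := by
      rw [← hmin]
      apply minpoly.dvd
      rw [map_sub, map_pow, aeval_X, ← hcardK, FiniteField.pow_card, sub_self]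
    obtain ⟨R, hR⟩ := hdvd
    have : A ^ q ^ 2 - A = 0 := by
      have := congrArg (aeval A) hR
      simpa only [_root_.map_mul, map_sub, map_pow, aeval_X, haev, zero_mul] using this
    rw [sub_eq_zero] at this
    exact this

lemma nil_pow_eq_zero (N : Matrix (Fin 2) (Fin 2) F) (hN : N ^ 2 = 0) {k : ℕ} (hk : 2 ≤ k) :
    N ^ k = 0 := by
  rw [show k = 2 + (k - 2) by omega, pow_add, hN, zero_mul]

lemma scalar_add_nil_pow (p : ℕ) [Fact p.Prime] [CharP F p] (a : F)
    (N : Matrix (Fin 2) (Fin 2) F) (hN : N ^ 2 = 0) (k : ℕ) (hk : 0 < k) :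
    (a • 1 + N) ^ p ^ k = a ^ p ^ k • 1 := by
  have hcomm : Commute (a • (1 : Matrix (Fin 2) (Fin 2) F)) N := by
    unfold Commute SemiconjBy
    rw [smul_one_mul, mul_smul_one]
  have h2 : 2 ≤ p ^ k := by
    calc 2 ≤ p := (Fact.out : p.Prime).two_le
    _ = p ^ 1 := (pow_one p).symm
    _ ≤ p ^ k := Nat.pow_le_pow_right (Fact.out : p.Prime).pos hk
  rw [add_pow_char_pow_of_commute p k hcomm, nil_pow_eq_zero N hN h2, add_zero,
    _root_.smul_pow, one_pow]

lemma isUnit_det_val (h : GL (Fin 2) F) : IsUnit ((h : Matrix (Fin 2) (Fin 2) F)).det := by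
  apply IsUnit.of_mul_eq_one ((↑h⁻¹ : Matrix (Fin 2) (Fin 2) F)).det
  rw [← Matrix.det_mul]
  rw [← Units.val_mul, mul_inv_cancel, Units.val_one, Matrix.det_one]

lemma image_eq (p M : ℕ) (hp : p.Prime) [CharP F p]
    (hcard : ∃ r : ℕ, 0 < r ∧ Fintype.card F = p ^ r) (hpM : p ∣ M)
    (hgcd : Nat.Coprime (Fintype.card F ^ 2 - 1) M) :
    {A : GL (Fin 2) F | ∃ g : GL (Fin 2) F, g ^ M = A} =
      {A : GL (Fin 2) F | A ^ (Fintype.card F ^ 2 - 1) = 1} := by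
  haveI : Fact p.Prime := ⟨hp⟩
  obtain ⟨r, hr, hcard⟩ := hcard
  set q := Fintype.card F with hq
  have hq2 : 1 ≤ q ^ 2 := Nat.one_le_pow _ _ Fintype.card_pos
  ext A
  simp only [Set.mem_setOf_eq]
  constructor
  · rintro ⟨g, rfl⟩
    obtain ⟨m, rfl⟩ := hpM
    have hgm : g ^ (p * m) = (g ^ m) ^ p := by rw [mul_comm, pow_mul]
    set h := g ^ m with hh
    rcases dichotomy (h : Matrix (Fin 2) (Fin 2) F) (isUnit_det_val h) with hss | ⟨a, ha0, hne, hsq⟩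
    · have hssu : h ^ q ^ 2 = h := by
        apply Units.ext
        rw [Units.val_pow_eq_pow_val]
        exact hss
      have hA : (g ^ (p * m)) ^ q ^ 2 = g ^ (p * m) := by
        rw [hgm, ← pow_right_comm, hssu]
      have : (g ^ (p * m)) ^ (q ^ 2 - 1) * g ^ (p * m) = 1 * g ^ (p * m) := by
        rw [one_mul, ← pow_succ, Nat.sub_add_cancel hq2, hA]
      exact mul_right_cancel this
    · have hAval : ((g ^ (p * m) : GL (Fin 2) F) : Matrix (Fin 2) (Fin 2) F) = a ^ p • 1 := by
        rw [hgm, Units.val_pow_eq_pow_val]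
        have hdec : (h : Matrix (Fin 2) (Fin 2) F) = a • 1 + ((h : Matrix (Fin 2) (Fin 2) F) - a • 1) := by
          abel
        rw [hdec]
        simpa using scalar_add_nil_pow p a ((h : Matrix (Fin 2) (Fin 2) F) - a • 1) hsq 1 one_pos
      set c := a ^ p with hc
      have hc0 : c ≠ 0 := pow_ne_zero _ ha0
      have hcpow : c ^ (q ^ 2 - 1) = 1 := by
        have h1 : c ^ (q ^ 2 - 1) * c = 1 * c := by
          rw [one_mul, ← pow_succ, Nat.sub_add_cancel hq2, FiniteField.pow_card_pow]
        exact mul_right_cancel₀ hc0 h1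
      apply Units.ext
      rw [Units.val_pow_eq_pow_val, hAval, _root_.smul_pow, one_pow, hcpow, one_smul, Units.val_one]
  · intro hA1
    have hord : orderOf A ∣ q ^ 2 - 1 := orderOf_dvd_of_pow_eq_one hA1
    have hcop : Nat.Coprime (Nat.card (Subgroup.zpowers A)) M := by
      rw [Nat.card_zpowers]
      exact Nat.Coprime.coprime_dvd_left hord hgcd
    obtain ⟨y, hy⟩ := (powCoprime hcop).surjective ⟨A, Subgroup.mem_zpowers A⟩
    refine ⟨y.val, ?_⟩
    have := congrArg (Subtype.val) hy
    rw [powCoprime_apply] at this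
    simpa using this


lemma sqzero_iff (N : Matrix (Fin 2) (Fin 2) F) :
    N ^ 2 = 0 ↔ N.trace = 0 ∧ N.det = 0 := by
  constructor
  · intro h
    have hd : N.det = 0 := by
      have := congrArg Matrix.det h
      rw [Matrix.det_pow, Matrix.det_zero] at this
      exact pow_eq_zero_iff (n := 2) (by norm_num) |>.mp this
    have hCH := CH2 N
    rw [h, hd] at hCH
    simp at hCH
    rcases hCH with ht | hN
    · exact ⟨ht, hd⟩
    · exact ⟨by simp [hN], hd⟩
  · rintro ⟨ht, hd⟩
    have hCH := CH2 N
    rw [ht, hd] at hCH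
    simpa using hCH

variable [DecidableEq F]

def e1 : {N : Matrix (Fin 2) (Fin 2) F // N ^ 2 = 0} ≃
    {v : F × F × F // v.1 * v.1 + v.2.1 * v.2.2 = 0} where
  toFun N := ⟨(N.1 0 0, N.1 0 1, N.1 1 0), by
    obtain ⟨ht, hd⟩ := (sqzero_iff N.1).mp N.2
    rw [Matrix.trace_fin_two] at ht
    rw [Matrix.det_fin_two] at hd
    linear_combination N.1 0 0 * ht - hd⟩
  invFun v := ⟨!![v.1.1, v.1.2.1; v.1.2.2, -v.1.1], by
    rw [sqzero_iff]
    constructor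
    · simp [Matrix.trace_fin_two]
    · rw [Matrix.det_fin_two]
      simp
      linear_combination -v.2⟩
  left_inv := by
    rintro ⟨N, hN⟩
    have ht := ((sqzero_iff N).mp hN).1
    rw [Matrix.trace_fin_two] at ht
    apply Subtype.ext
    dsimp only
    ext i j
    fin_cases i <;> fin_cases j <;> simp <;> linear_combination -ht
  right_inv := by
    rintro ⟨⟨α, β, γ⟩, h⟩
    apply Subtype.ext
    simp

def e2 : {v : F × F × F // v.1 * v.1 + v.2.1 * v.2.2 = 0} ≃ F × F where
  toFun v := if v.1.2.1 = 0 then (v.1.2.2, 0) else (v.1.1, v.1.2.1)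
  invFun w := if h : w.2 = 0 then ⟨(0, 0, w.1), by simp⟩
    else ⟨(w.1, w.2, -(w.1 * w.1) / w.2), by field_simp; ring⟩
  left_inv := by
    rintro ⟨⟨α, β, γ⟩, h⟩
    dsimp only
    by_cases hβ : β = 0
    · subst hβ
      have hα : α = 0 := by
        have : α * α = 0 := by linear_combination h
        exact mul_self_eq_zero.mp this
      subst hα
      simp
    · rw [if_neg hβ, dif_neg (show ¬(α, β).2 = 0 from hβ)]
      apply Subtype.ext
      have hγ : -(α * α) / β = γ := by
        field_simp
        linear_combination -h
      simp [hγ]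
  right_inv := by
    rintro ⟨x, y⟩
    dsimp only
    by_cases hy : y = 0
    · subst hy
      rw [dif_pos rfl]
      simp
    · rw [dif_neg (show ¬(x, y).2 = 0 from hy)]
      simp [hy]

lemma card_sqzero : Nat.card {N : Matrix (Fin 2) (Fin 2) F // N ^ 2 = 0} = Fintype.card F ^ 2 := by
  rw [Nat.card_congr (e1.trans e2)]
  simp [Nat.card_eq_fintype_card, sq]

lemma card_sqzero_nonzero :
    Nat.card {N : Matrix (Fin 2) (Fin 2) F // N ≠ 0 ∧ N ^ 2 = 0} = Fintype.card F ^ 2 - 1 := by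
  classical
  have h0 : ((0 : Matrix (Fin 2) (Fin 2) F)) ^ 2 = 0 := by simp
  let z : {N : Matrix (Fin 2) (Fin 2) F // N ^ 2 = 0} := ⟨0, h0⟩
  have e3 : {N : Matrix (Fin 2) (Fin 2) F // N ≠ 0 ∧ N ^ 2 = 0} ≃
      {x : {N : Matrix (Fin 2) (Fin 2) F // N ^ 2 = 0} // ¬ x = z} :=
    { toFun := fun N => ⟨⟨N.1, N.2.2⟩, fun hcon => N.2.1 (congrArg Subtype.val hcon)⟩
      invFun := fun x => ⟨x.1.1, ⟨fun h0' => x.2 (Subtype.ext h0'), x.1.2⟩⟩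
      left_inv := fun _ => rfl
      right_inv := fun _ => rfl }
  rw [Nat.card_congr e3, Nat.card_eq_fintype_card, Fintype.card_subtype_compl,
    Fintype.card_subtype_eq, ← Nat.card_eq_fintype_card, card_sqzero]

lemma card_bad (p r : ℕ) (hp : p.Prime) (hr : 0 < r) [CharP F p]
    (hcard : Fintype.card F = p ^ r) :
    Nat.card {A : GL (Fin 2) F // ¬ A ^ (Fintype.card F ^ 2 - 1) = 1} =
      (Fintype.card F - 1) * (Fintype.card F ^ 2 - 1) := by
  haveI : Fact p.Prime := ⟨hp⟩
  have hq2 : 1 ≤ Fintype.card F ^ 2 := Nat.one_le_pow _ _ Fintype.card_pos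
  have key : ∀ (a : F) (N : Matrix (Fin 2) (Fin 2) F), N ^ 2 = 0 →
      (a • 1 + N) ^ (Fintype.card F ^ 2) = a • 1 := by
    intro a N hN
    have h2r : Fintype.card F ^ 2 = p ^ (r * 2) := by rw [hcard, pow_mul]
    rw [h2r, scalar_add_nil_pow p a N hN (r * 2) (by positivity), ← h2r,
      FiniteField.pow_card_pow]
  -- the units
  have hdet : ∀ (a : F) (N : Matrix (Fin 2) (Fin 2) F), N ^ 2 = 0 →
      (a • 1 + N).det = a * a := by
    intro a N hN
    obtain ⟨ht, hd⟩ := (sqzero_iff N).mp hN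
    rw [Matrix.trace_fin_two] at ht
    rw [Matrix.det_fin_two] at hd
    rw [Matrix.det_fin_two]
    simp only [Matrix.add_apply, Matrix.smul_apply, Matrix.one_apply_eq, Matrix.one_apply_ne
      (by decide : (0 : Fin 2) ≠ 1), Matrix.one_apply_ne (by decide : (1 : Fin 2) ≠ 0),
      smul_eq_mul, mul_one, mul_zero, add_zero, zero_add]
    linear_combination a * ht + hd
  have hunit : ∀ (a : F) (N : Matrix (Fin 2) (Fin 2) F), a ≠ 0 → N ^ 2 = 0 →
      IsUnit (a • 1 + N) := by
    intro a N ha hN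
    rw [Matrix.isUnit_iff_isUnit_det, hdet a N hN]
    exact (ha.isUnit).mul ha.isUnit
  -- the bijection
  let φ : ({a : F // a ≠ 0} × {N : Matrix (Fin 2) (Fin 2) F // N ≠ 0 ∧ N ^ 2 = 0}) →
      {A : GL (Fin 2) F // ¬ A ^ (Fintype.card F ^ 2 - 1) = 1} := fun x =>
    ⟨(hunit x.1.1 x.2.1 x.1.2 x.2.2.2).unit, by
      intro hone
      set u := (hunit x.1.1 x.2.1 x.1.2 x.2.2.2).unit with hu
      have huval : (u : Matrix (Fin 2) (Fin 2) F) = x.1.1 • 1 + x.2.1 :=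
        (hunit x.1.1 x.2.1 x.1.2 x.2.2.2).unit_spec
      have hup : u ^ (Fintype.card F ^ 2) = u := by
        have : u ^ (Fintype.card F ^ 2 - 1) * u = 1 * u := by rw [hone]
        rw [one_mul, ← pow_succ, Nat.sub_add_cancel hq2] at this
        exact this
      have := congrArg Units.val hup
      rw [Units.val_pow_eq_pow_val, huval, key x.1.1 x.2.1 x.2.2.2] at this
      exact x.2.2.1 (by
        have := congrArg (fun m => m - x.1.1 • (1 : Matrix (Fin 2) (Fin 2) F)) this
        simpa using this.symm)⟩
  have hinj : Function.Injective φ := by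
    rintro ⟨⟨a, ha⟩, ⟨N, hN0, hN⟩⟩ ⟨⟨b, hb⟩, ⟨N', hN0', hN'⟩⟩ hxy
    have hval : a • (1 : Matrix (Fin 2) (Fin 2) F) + N = b • 1 + N' := by
      have := congrArg (fun z => ((z : {A : GL (Fin 2) F // _}) : GL (Fin 2) F).val) hxy
      simpa [φ, IsUnit.unit_spec] using this
    have hab : a = b := by
      by_contra hab
      have hc : b - a ≠ 0 := sub_ne_zero.mpr (Ne.symm hab)
      have hNrel : N = (b - a) • 1 + N' := by
        have h0 : N = b • 1 + N' - a • 1 := by rw [← hval]; abel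
        rw [h0, sub_smul]
        abel
      have hexp : ((b - a) • (1 : Matrix (Fin 2) (Fin 2) F) + N') * ((b - a) • 1 + N') = 0 := by
        rw [← pow_two, ← hNrel, hN]
      have hexp2 : ((b - a) * (b - a)) • (1 : Matrix (Fin 2) (Fin 2) F)
          + (2 * (b - a)) • N' + N' * N' = 0 := by
        rw [← hexp]
        simp only [mul_add, add_mul, smul_one_mul, mul_smul_one, smul_smul, smul_add, two_mul, add_smul]
        abel
      have hNN' : N' * N' = 0 := by rw [← pow_two]; exact hN'
      rw [hNN', add_zero] at hexp2
      have h3 : ((b - a) * (b - a)) • N' = 0 := by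
        have h4 := congrArg (fun m => m * N') hexp2
        simpa [add_mul, smul_one_mul, smul_mul_assoc, hNN'] using h4
      rcases smul_eq_zero.mp h3 with hcc | h5
      · exact hc (mul_self_eq_zero.mp hcc)
      · exact hN0' h5
    subst hab
    have hNN : N = N' := by
      have := congrArg (fun m => m - a • (1 : Matrix (Fin 2) (Fin 2) F)) hval
      simpa using this
    subst hNN
    rfl
  have hsurj : Function.Surjective φ := by
    rintro ⟨A, hA⟩
    rcases dichotomy (A : Matrix (Fin 2) (Fin 2) F) (isUnit_det_val A) with hss | ⟨a, ha0, hne, hsq⟩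
    · exfalso
      apply hA
      have hAu : A ^ (Fintype.card F ^ 2) = A := Units.ext (by
        rw [Units.val_pow_eq_pow_val]; exact hss)
      have : A ^ (Fintype.card F ^ 2 - 1) * A = 1 * A := by
        rw [one_mul, ← pow_succ, Nat.sub_add_cancel hq2, hAu]
      exact mul_right_cancel this
    · have hN0 : (A : Matrix (Fin 2) (Fin 2) F) - a • 1 ≠ 0 := sub_ne_zero.mpr hne
      refine ⟨(⟨a, ha0⟩, ⟨(A : Matrix (Fin 2) (Fin 2) F) - a • 1, hN0, hsq⟩), ?_⟩
      apply Subtype.ext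
      apply Units.ext
      exact ((hunit a ((A : Matrix (Fin 2) (Fin 2) F) - a • 1) ha0 hsq).unit_spec).trans (by abel)
  rw [Nat.card_congr (Equiv.ofBijective φ ⟨hinj, hsurj⟩).symm, Nat.card_prod]
  congr 1
  · rw [Nat.card_eq_fintype_card, Fintype.card_subtype_compl (fun a : F => a = 0),
      Fintype.card_subtype_eq]
  · rw [card_sqzero_nonzero]

theorem powerMap_ratio_GL2 (p r M : ℕ) (hp : p.Prime) (hr : 0 < r)
    (F : Type) [Field F] [Fintype F] [CharP F p] (q : ℕ) (hq : q = Fintype.card F)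
    (hcard : q = p ^ r) (hM : 0 < M) (hpM : p ∣ M) (hgcd : Nat.gcd (q ^ 2 - 1) M = 1) :
    (Nat.card {A : GL (Fin 2) F | ∃ g : GL (Fin 2) F, g ^ M = A} : ℝ) /
        (Nat.card (GL (Fin 2) F) : ℝ) = 1 - 1 / q := by
  classical
  haveI : Fact p.Prime := ⟨hp⟩
  subst hq
  have himg := image_eq (F := F) p M hp ⟨r, hr, hcard⟩ hpM hgcd
  rw [himg]
  simp only [Set.coe_setOf]
  have hcompl : Nat.card {A : GL (Fin 2) F // A ^ (Fintype.card F ^ 2 - 1) = 1} =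
      Nat.card (GL (Fin 2) F) -
        Nat.card {A : GL (Fin 2) F // ¬ A ^ (Fintype.card F ^ 2 - 1) = 1} := by
    rw [Nat.card_eq_fintype_card, Nat.card_eq_fintype_card, Nat.card_eq_fintype_card]
    have hcc := Fintype.card_subtype_compl
      (fun A : GL (Fin 2) F => ¬ A ^ (Fintype.card F ^ 2 - 1) = 1)
    rw [← hcc]
    exact Fintype.card_congr (Equiv.subtypeEquivRight (fun x => (not_not).symm))
  have hbad := card_bad (F := F) p r hp hr hcard
  have hGL : Nat.card (GL (Fin 2) F) =
      (Fintype.card F ^ 2 - 1) * (Fintype.card F ^ 2 - Fintype.card F) := by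
    rw [Matrix.card_GL_field, Fin.prod_univ_two]
    norm_num
  have h2q : 2 ≤ Fintype.card F := Fintype.one_lt_card
  set qn := Fintype.card F with hqn
  have hqq : qn ^ 2 = qn * qn := sq qn
  have h2qq : 2 * qn ≤ qn * qn := Nat.mul_le_mul_right qn h2q
  have hle : (qn - 1) * (qn ^ 2 - 1) ≤ (qn ^ 2 - 1) * (qn ^ 2 - qn) := by
    rw [mul_comm]
    apply Nat.mul_le_mul_left
    omega
  have hgood : Nat.card {A : GL (Fin 2) F // A ^ (qn ^ 2 - 1) = 1} =
      (qn ^ 2 - 1) * (qn ^ 2 - qn) - (qn - 1) * (qn ^ 2 - 1) := by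
    rw [hcompl, hbad, hGL]
  rw [hgood, hGL]
  have h1qn : 1 ≤ qn ^ 2 := by omega
  have hqle : qn ≤ qn ^ 2 := by omega
  have h1q : 1 ≤ qn := by omega
  rw [Nat.cast_sub hle]
  push_cast [Nat.cast_sub h1qn, Nat.cast_sub hqle, Nat.cast_sub h1q]
  have hQ2 : (2 : ℝ) ≤ (qn : ℝ) := by exact_mod_cast h2q
  have hQ0 : (qn : ℝ) ≠ 0 := by nlinarith
  have hd1 : (qn : ℝ) ^ 2 - 1 ≠ 0 := by nlinarith
  have hd2 : (qn : ℝ) ^ 2 - qn ≠ 0 := by nlinarith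
  field_simp
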